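/- Let α be a positive integer, 0 < p = 1 - q < 1, z > 1, and let 1 ≤ k ≤ α with k ≥ z. Then h₁(k) = ∑_{j=k}^{α} [(α-k)!/(α-j)!]·[(k-1)!/j!]·(p/q)^{j-k}·(j-z)^+ satisfies h₁(k) ≤ 1 + (q^{k-α} - 1)/z. -/

import Mathlib

open Finset

/-- `E[(B_{α,p} - z)^+]`, the expected call function of a binomial random variable
`B_{α,p}` with `P(B = j) = C(α,j) p^j (1-p)^{α-j}` for `j = 0,…,α`. -/
noncomputable def binomCallExp (α : ℕ) (p z : ℝ) : ℝ :=
  ∑ j ∈ Finset.range (α + 1),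
    (α.choose j : ℝ) * p ^ j * (1 - p) ^ (α - j) * max ((j : ℝ) - z) 0

/-- `h₁(k) = ∑_{j=k}^{α} [(α-k)!/(α-j)!]·[(k-1)!/j!]·(p/q)^{j-k}·(j-z)^+` with `q = 1 - p`. -/
noncomputable def h1 (α : ℕ) (p z : ℝ) (k : ℕ) : ℝ :=
  ∑ j ∈ Finset.Icc k α,
    ((α - k).factorial : ℝ) / ((α - j).factorial : ℝ) *
      (((k - 1).factorial : ℝ) / (j.factorial : ℝ)) *
        (p / (1 - p)) ^ (j - k) * max ((j : ℝ) - z) 0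

/-- `h₂(k) = ∑_{j=k}^{α} [(α-k)!/(α-j)!]·[(k-1)!/j!]·(p/q)^{j-k}·E[(B_{α,p}-z)^+]`
with `q = 1 - p`. -/
noncomputable def h2 (α : ℕ) (p z : ℝ) (k : ℕ) : ℝ :=
  ∑ j ∈ Finset.Icc k α,
    ((α - k).factorial : ℝ) / ((α - j).factorial : ℝ) *
      (((k - 1).factorial : ℝ) / (j.factorial : ℝ)) *
        (p / (1 - p)) ^ (j - k) * binomCallExp α p z

/-- The solution `g_z` of the binomial Stein equation: `g_z(0) = 0`,
`g_z(k) = -∑_{j=k}^{α} [(α-k)!/(α-j)!]·[(k-1)!/j!]·(p/q)^{j-k}·[(j-z)^+ - E(B_{α,p}-z)^+]`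
for `1 ≤ k ≤ α`, extended by `g_z(k) = 0` for `k > α` (in particular `g_z(α+1) = 0`). -/
noncomputable def steinSol (α : ℕ) (p z : ℝ) (k : ℕ) : ℝ :=
  if k = 0 ∨ α < k then 0
  else
    -∑ j ∈ Finset.Icc k α,
      ((α - k).factorial : ℝ) / ((α - j).factorial : ℝ) *
        (((k - 1).factorial : ℝ) / (j.factorial : ℝ)) *
          (p / (1 - p)) ^ (j - k) * (max ((j : ℝ) - z) 0 - binomCallExp α p z)

/-- Auxiliary factorial inequality: for `k ≥ 1`, `k! · (x+1)! ≤ (k+x)!`. -/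
lemma fact_aux (k : ℕ) (hk : 1 ≤ k) : ∀ x : ℕ,
    k.factorial * (x + 1).factorial ≤ (k + x).factorial := by
  intro x
  induction x with
  | zero => simp [Nat.factorial]
  | succ n ih =>
      calc k.factorial * (n + 1 + 1).factorial
          = k.factorial * (n + 1).factorial * (n + 2) := by
            rw [Nat.factorial_succ]; ring
        _ ≤ (k + n).factorial * (n + 2) := Nat.mul_le_mul_right _ ih
        _ ≤ (k + n).factorial * (k + n + 1) := Nat.mul_le_mul_left _ (by omega)
        _ = (k + n + 1).factorial := by rw [Nat.factorial_succ]; ring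

/-- For `z > 1` and `1 ≤ k ≤ α` with `k ≥ z`,
`h₁(k) ≤ 1 + (q^{k-α} - 1)/z`. -/
theorem h1_le_of_ge (α : ℕ) (hα : 0 < α) (p q : ℝ)
    (hq : q = 1 - p) (hp : 0 < p) (hp1 : p < 1) (z : ℝ) (hz : 1 < z)
    (k : ℕ) (hk : 1 ≤ k) (hkα : k ≤ α) (hzk : z ≤ (k : ℝ)) :
    h1 α p z k ≤ 1 + (q ^ ((k : ℤ) - (α : ℤ)) - 1) / z := by
  subst hq
  have hq0 : (0:ℝ) < 1 - p := by linarith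
  have hz0 : (0:ℝ) < z := by linarith
  have hk0 : (0:ℝ) < (k:ℝ) := by exact_mod_cast hk
  set r : ℝ := p / (1 - p) with hr
  have hr0 : 0 < r := div_pos hp hq0
  set t : ℕ → ℝ := fun j =>
    if j = k then 1 - z / k else ((α - k).choose (j - k) : ℝ) * r ^ (j - k) / k with ht
  -- Step 1: termwise bound
  have hstep : h1 α p z k ≤ ∑ j ∈ Icc k α, t j := by
    unfold h1
    apply Finset.sum_le_sum
    intro j hj
    simp only [Finset.mem_Icc] at hj
    obtain ⟨hkj, hjα⟩ := hj
    by_cases hjk : j = k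
    · subst hjk
      simp only [ht, if_pos rfl, Nat.sub_self, pow_zero]
      have hfk : ((j - 1).factorial : ℝ) / (j.factorial : ℝ) = 1 / j := by
        rw [← Nat.mul_factorial_pred (by omega : j ≠ 0)]
        push_cast
        field_simp
      rw [div_self (by positivity : ((α - j).factorial : ℝ) ≠ 0), hfk,
        max_eq_left (by linarith : (0:ℝ) ≤ (j:ℝ) - z)]
      rw [show (1:ℝ) * (1 / j) * 1 * ((j:ℝ) - z) = ((j:ℝ) - z) / j by ring,
        sub_div, div_self hk0.ne']
    · have hkj1 : k + 1 ≤ j := by omega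
      simp only [ht, if_neg hjk]
      -- max ((j:ℝ) - z) 0 ≤ j
      have hmax : max ((j:ℝ) - z) 0 ≤ (j:ℝ) := by
        apply max_le (by linarith) (Nat.cast_nonneg j)
      have hco : (0:ℝ) ≤ ((α - k).factorial : ℝ) / ((α - j).factorial : ℝ) *
          (((k - 1).factorial : ℝ) / (j.factorial : ℝ)) * r ^ (j - k) := by positivity
      refine le_trans (mul_le_mul_of_nonneg_left hmax hco) ?_
      -- key nat inequality
      have hc : (α - k).choose (j - k) * (j - k).factorial * (α - j).factorial
          = (α - k).factorial := by
        have h := Nat.choose_mul_factorial_mul_factorial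
          (show j - k ≤ α - k by omega)
        rwa [show α - k - (j - k) = α - j by omega] at h
      have haux : k.factorial * (j - k).factorial ≤ (j - 1).factorial := by
        have h := fact_aux k hk (j - k - 1)
        rwa [show j - k - 1 + 1 = j - k by omega, show k + (j - k - 1) = j - 1 by omega] at h
      have natkey : (α - k).factorial * ((k - 1).factorial * j) * k ≤
          (α - k).choose (j - k) * ((α - j).factorial * j.factorial) := by
        have hj0 : 0 < j := by omega
        have hjf : j.factorial = j * (j - 1).factorial := (Nat.mul_factorial_pred (by omega : j ≠ 0)).symm
        have hkf : k * (k - 1).factorial = k.factorial := Nat.mul_factorial_pred (by omega : k ≠ 0)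
        have S1 : (α - k).factorial * k.factorial ≤
            (α - k).choose (j - k) * ((α - j).factorial * (j - 1).factorial) := by
          apply Nat.le_of_mul_le_mul_right _ (Nat.factorial_pos (j - k))
          calc (α - k).factorial * k.factorial * (j - k).factorial
              = (α - k).factorial * (k.factorial * (j - k).factorial) := by ring
            _ ≤ (α - k).factorial * (j - 1).factorial :=
                Nat.mul_le_mul_left _ haux
            _ = ((α - k).choose (j - k) * (j - k).factorial * (α - j).factorial) *
                (j - 1).factorial := by rw [hc]
            _ = (α - k).choose (j - k) * ((α - j).factorial * (j - 1).factorial) *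
                (j - k).factorial := by ring
        calc (α - k).factorial * ((k - 1).factorial * j) * k
            = ((α - k).factorial * (k * (k - 1).factorial)) * j := by ring
          _ = ((α - k).factorial * k.factorial) * j := by rw [hkf]
          _ ≤ ((α - k).choose (j - k) * ((α - j).factorial * (j - 1).factorial)) * j :=
              Nat.mul_le_mul_right _ S1
          _ = (α - k).choose (j - k) * ((α - j).factorial * (j * (j - 1).factorial)) := by
              ring
          _ = (α - k).choose (j - k) * ((α - j).factorial * j.factorial) := by rw [← hjf]
      -- pass to ℝ
      have rkey : ((α - k).factorial : ℝ) * (((k - 1).factorial : ℝ) * j) * k ≤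
          ((α - k).choose (j - k) : ℝ) * (((α - j).factorial : ℝ) * (j.factorial : ℝ)) := by
        exact_mod_cast natkey
      have hd1 : (0:ℝ) < ((α - j).factorial : ℝ) := by positivity
      have hd2 : (0:ℝ) < (j.factorial : ℝ) := by positivity
      rw [show ((α - k).factorial : ℝ) / ((α - j).factorial : ℝ) *
          (((k - 1).factorial : ℝ) / (j.factorial : ℝ)) * r ^ (j - k) * (j:ℝ)
          = (((α - k).factorial : ℝ) * (((k - 1).factorial : ℝ) * j))
            / (((α - j).factorial : ℝ) * (j.factorial : ℝ)) * r ^ (j - k) by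
            field_simp]
      rw [div_mul_eq_mul_div, div_le_div_iff₀ (by positivity) hk0]
      calc ((α - k).factorial : ℝ) * (((k - 1).factorial : ℝ) * j) * r ^ (j - k) * k
          = (((α - k).factorial : ℝ) * (((k - 1).factorial : ℝ) * j) * k) * r ^ (j - k) := by
            ring
        _ ≤ (((α - k).choose (j - k) : ℝ) *
            (((α - j).factorial : ℝ) * (j.factorial : ℝ))) * r ^ (j - k) := by
            apply mul_le_mul_of_nonneg_right rkey (by positivity)
        _ = ((α - k).choose (j - k) : ℝ) * r ^ (j - k) *
            (((α - j).factorial : ℝ) * (j.factorial : ℝ)) := by ring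
  -- Step 2: compute the sum of t
  have hbin : ∑ x ∈ range (α - k + 1), ((α - k).choose x : ℝ) * r ^ x
      = (1 / (1 - p)) ^ (α - k) := by
    have h := add_pow r 1 (α - k)
    simp only [one_pow, mul_one] at h
    have hr1 : r + 1 = 1 / (1 - p) := by
      rw [hr]; field_simp; ring
    rw [← hr1, h]
    apply Finset.sum_congr rfl
    intro x _
    ring
  have hsum : ∑ j ∈ Icc k α, t j
      = (1 - z / k) + ((1 / (1 - p)) ^ (α - k) - 1) / k := by
    rw [← Finset.Ico_add_one_right_eq_Icc, Finset.sum_Ico_eq_sum_range,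
      show α + 1 - k = (α - k) + 1 by omega, Finset.sum_range_succ']
    have h0 : t (k + 0) = 1 - z / k := by simp [ht]
    have hrest : ∀ i, t (k + (i + 1)) = ((α - k).choose (i + 1) : ℝ) * r ^ (i + 1) / k := by
      intro i
      simp only [ht, if_neg (by omega : ¬ k + (i + 1) = k),
        show k + (i + 1) - k = i + 1 by omega]
    rw [h0]
    have : ∑ i ∈ range (α - k), t (k + (i + 1))
        = ∑ i ∈ range (α - k), ((α - k).choose (i + 1) : ℝ) * r ^ (i + 1) / k :=
      Finset.sum_congr rfl fun i _ => hrest i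
    rw [this]
    have hsplit : ∑ x ∈ range (α - k + 1), ((α - k).choose x : ℝ) * r ^ x / k
        = (∑ i ∈ range (α - k), ((α - k).choose (i + 1) : ℝ) * r ^ (i + 1) / k)
          + ((α - k).choose 0 : ℝ) * r ^ 0 / k := by
      exact Finset.sum_range_succ' _ _
    have hS : ∑ x ∈ range (α - k + 1), ((α - k).choose x : ℝ) * r ^ x / k
        = (1 / (1 - p)) ^ (α - k) / k := by
      rw [← Finset.sum_div, hbin]
    rw [hS] at hsplit
    simp only [Nat.choose_zero_right, Nat.cast_one, pow_zero, one_mul] at hsplit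
    have : ∑ i ∈ range (α - k), ((α - k).choose (i + 1) : ℝ) * r ^ (i + 1) / k
        = (1 / (1 - p)) ^ (α - k) / k - 1 / k := by linarith
    rw [this]
    ring
  -- Step 3: conclude
  have hzpow : (1 - p) ^ ((k : ℤ) - (α : ℤ)) = (1 / (1 - p)) ^ (α - k) := by
    rw [show (k : ℤ) - (α : ℤ) = -((α - k : ℕ) : ℤ) by
        push_cast [Nat.cast_sub hkα]; ring,
      zpow_neg, zpow_natCast, ← inv_pow, one_div]
  rw [hzpow]
  set Q : ℝ := (1 / (1 - p)) ^ (α - k) with hQ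
  have hQ1 : 1 ≤ Q := one_le_pow₀ (one_le_one_div hq0 (by linarith))
  have hmono : (Q - 1) / k ≤ (Q - 1) / z :=
    div_le_div_of_nonneg_left (by linarith) hz0 hzk
  have hzk' : 0 < z / k := by positivity
  calc h1 α p z k ≤ ∑ j ∈ Icc k α, t j := hstep
    _ = (1 - z / k) + (Q - 1) / k := by rw [hsum]
    _ ≤ 1 + (Q - 1) / z := by linarith
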